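/- For 0 < x < 1, ∫_0^x log^2(1-t)/t dt = log(x) log^2(1-x) + 2 log(1-x) Li_2(1-x) - 2 Li_3(1-x) + 2 ζ(3). -/

import Mathlib

open Real Filter Finset
open scoped Topology

noncomputable def Li (m : ℕ) (x : ℝ) : ℝ := ∑' n : ℕ, x ^ (n + 1) / (n + 1 : ℝ) ^ m

noncomputable def H (p n : ℕ) : ℝ := ∑ j ∈ Finset.Icc 1 n, 1 / (j : ℝ) ^ p

noncomputable def Hbar (p n : ℕ) : ℝ := ∑ j ∈ Finset.Icc 1 n, (-1 : ℝ) ^ (j - 1) / (j : ℝ) ^ p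

lemma hasDerivAt_Li_aux (m : ℕ) {y : ℝ} (hy : |y| < 1) :
    HasDerivAt (Li (m + 1)) (∑' n : ℕ, y ^ n / ((n : ℝ) + 1) ^ m) y := by
  set r : ℝ := (1 + |y|) / 2 with hr
  have hy0 : 0 ≤ |y| := abs_nonneg y
  have hr1 : r < 1 := by rw [hr]; linarith
  have hr0 : 0 < r := by rw [hr]; linarith
  have hyr : |y| < r := by rw [hr]; linarith
  have key := hasDerivAt_tsum_of_isPreconnected
    (g := fun (n : ℕ) (z : ℝ) => z ^ (n + 1) / ((n : ℝ) + 1) ^ (m + 1))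
    (g' := fun (n : ℕ) (z : ℝ) => z ^ n / ((n : ℝ) + 1) ^ m)
    (u := fun n : ℕ => r ^ n) (y₀ := (0 : ℝ)) (y := y) (t := Set.Ioo (-r) r)
    (summable_geometric_of_lt_one hr0.le hr1) isOpen_Ioo (convex_Ioo _ _).isPreconnected
    ?_ ?_ ?_ ?_ ?_
  · exact key
  · intro n z _
    have hn : ((n : ℝ) + 1) ≠ 0 := by positivity
    have h := (hasDerivAt_pow (n + 1) z).div_const (((n : ℝ) + 1) ^ (m + 1))
    refine h.congr_deriv (Eq.symm ?_)
    push_cast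
    rw [pow_succ ((n : ℝ) + 1)]
    field_simp
  · intro n z hz
    have hz' : |z| ≤ r := le_of_lt (abs_lt.2 ⟨hz.1, hz.2⟩)
    have h1 : (1 : ℝ) ≤ ((n : ℝ) + 1) ^ m :=
      one_le_pow₀ (by linarith [Nat.cast_nonneg (α := ℝ) n])
    rw [norm_div, norm_pow, Real.norm_eq_abs, Real.norm_eq_abs,
      abs_of_pos (by positivity : (0:ℝ) < ((n : ℝ) + 1) ^ m)]
    calc |z| ^ n / ((n : ℝ) + 1) ^ m ≤ |z| ^ n := div_le_self (by positivity) h1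
      _ ≤ r ^ n := pow_le_pow_left₀ (abs_nonneg z) hz' n
  · exact Set.mem_Ioo.2 ⟨by linarith, hr0⟩
  · apply Summable.congr summable_zero
    intro n; simp [zero_pow (Nat.succ_ne_zero n)]
  · exact Set.mem_Ioo.2 (abs_lt.1 hyr)

lemma Li_one_eq {y : ℝ} (hy : |y| < 1) : Li 1 y = -Real.log (1 - y) := by
  have := (Real.hasSum_pow_div_log_of_abs_lt_one hy).tsum_eq
  unfold Li
  simpa [pow_one] using this

lemma Li_eq_mul (m : ℕ) (y : ℝ) : Li m y = y * ∑' n : ℕ, y ^ n / ((n : ℝ) + 1) ^ m := by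
  unfold Li
  rw [← tsum_mul_left]
  congr 1; funext n
  rw [pow_succ]
  ring

lemma hasDerivAt_Li2 {y : ℝ} (hy0 : 0 < y) (hy1 : y < 1) :
    HasDerivAt (Li 2) (-Real.log (1 - y) / y) y := by
  have habs : |y| < 1 := abs_lt.2 ⟨by linarith, hy1⟩
  have h := hasDerivAt_Li_aux 1 habs
  have hs : -Real.log (1 - y) = y * ∑' n : ℕ, y ^ n / ((n : ℝ) + 1) ^ 1 := by
    rw [← Li_eq_mul, Li_one_eq habs]
  have : (∑' n : ℕ, y ^ n / ((n : ℝ) + 1) ^ 1) = -Real.log (1 - y) / y := by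
    rw [hs, mul_div_cancel_left₀ _ (ne_of_gt hy0)]
  rwa [this] at h

lemma hasDerivAt_Li3 {y : ℝ} (hy0 : 0 < y) (hy1 : y < 1) :
    HasDerivAt (Li 3) (Li 2 y / y) y := by
  have habs : |y| < 1 := abs_lt.2 ⟨by linarith, hy1⟩
  have h := hasDerivAt_Li_aux 2 habs
  have : (∑' n : ℕ, y ^ n / ((n : ℝ) + 1) ^ 2) = Li 2 y / y := by
    rw [Li_eq_mul 2 y, mul_div_cancel_left₀ _ (ne_of_gt hy0)]
  rwa [this] at h

lemma continuousOn_Li {m : ℕ} (hm : 2 ≤ m) : ContinuousOn (Li m) (Set.Icc (0 : ℝ) 1) := by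
  have hsum : Summable (fun n : ℕ => 1 / ((n : ℝ) + 1) ^ m) := by
    have h0 : Summable (fun n : ℕ => 1 / (n : ℝ) ^ m) := summable_one_div_nat_pow.2 hm
    have h1 := (summable_nat_add_iff 1).2 h0
    apply h1.congr
    intro n; push_cast; ring_nf
  have := (tendstoUniformlyOn_tsum (f := fun (n : ℕ) (z : ℝ) => z ^ (n + 1) / ((n : ℝ) + 1) ^ m)
    (s := Set.Icc (0 : ℝ) 1) hsum ?_).continuousOn ?_
  · exact this
  · intro n z hz
    obtain ⟨hz0, hz1⟩ := hz
    rw [norm_div, norm_pow, Real.norm_eq_abs, Real.norm_eq_abs, abs_of_nonneg hz0,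
      abs_of_pos (by positivity : (0:ℝ) < ((n : ℝ) + 1) ^ m)]
    gcongr
    exact pow_le_one₀ hz0 hz1
  · refine Filter.Frequently.of_forall fun t => ?_
    exact (continuous_finset_sum t fun n _ => (continuous_pow (n + 1)).div_const _).continuousOn

theorem stmt9 (x : ℝ) (hx0 : 0 < x) (hx1 : x < 1) :
    ∫ t in (0 : ℝ)..x, (Real.log (1 - t)) ^ 2 / t
      = Real.log x * (Real.log (1 - x)) ^ 2 + 2 * Real.log (1 - x) * Li 2 (1 - x)
        - 2 * Li 3 (1 - x) + 2 * Li 3 1 := by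
  set Φ : ℝ → ℝ := fun t => Real.log t * (Real.log (1 - t)) ^ 2
    + 2 * Real.log (1 - t) * Li 2 (1 - t) - 2 * Li 3 (1 - t) + 2 * Li 3 1 with hΦ
  -- auxiliary limits
  have hslope : Tendsto (fun t : ℝ => Real.log (1 - t) / t) (𝓝[≠] 0) (𝓝 (-1)) := by
    have hd : HasDerivAt (fun u : ℝ => Real.log (1 - u)) (-1) 0 := by
      have h1 : HasDerivAt (fun u : ℝ => 1 - u) (-1) 0 := (hasDerivAt_id 0).const_sub 1
      have := (Real.hasDerivAt_log (by norm_num : (1:ℝ) - 0 ≠ 0)).comp 0 h1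
      refine this.congr_deriv (Eq.symm ?_)
      norm_num
    have := hasDerivAt_iff_tendsto_slope.1 hd
    apply this.congr'
    filter_upwards with t
    simp [slope_def_field]
  have hlog1t : Tendsto (fun t : ℝ => Real.log (1 - t)) (𝓝 0) (𝓝 0) := by
    have : ContinuousAt (fun t : ℝ => Real.log (1 - t)) 0 :=
      (Real.continuousAt_log (by norm_num)).comp (by fun_prop)
    simpa using this.tendsto
  -- continuity of the integrand on [0, x]
  have hfid : (fun t : ℝ => (Real.log (1 - t)) ^ 2 / t)
      = fun t => Real.log (1 - t) / t * Real.log (1 - t) := by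
    funext t; rw [div_mul_eq_mul_div, ← pow_two]
  have hcontf : ContinuousOn (fun t : ℝ => (Real.log (1 - t)) ^ 2 / t) (Set.Icc 0 x) := by
    intro t ht
    rcases eq_or_ne t 0 with rfl | htne
    · -- continuity within at 0
      have h1 : Tendsto (fun t : ℝ => (Real.log (1 - t)) ^ 2 / t) (𝓝[≠] 0) (𝓝 0) := by
        rw [hfid]
        have := hslope.mul (hlog1t.mono_left nhdsWithin_le_nhds)
        simpa using this
      have h2 : Tendsto (fun t : ℝ => (Real.log (1 - t)) ^ 2 / t) (pure 0) (𝓝 0) := by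
        rw [tendsto_pure_left]
        intro s hs
        simpa using mem_of_mem_nhds hs
      have h3 : Tendsto (fun t : ℝ => (Real.log (1 - t)) ^ 2 / t) (𝓝 0) (𝓝 0) := by
        have := tendsto_sup.2 ⟨h1, h2⟩
        rwa [nhdsNE_sup_pure] at this
      have h4 := h3.mono_left (nhdsWithin_le_nhds : 𝓝[Set.Icc 0 x] (0:ℝ) ≤ 𝓝 0)
      unfold ContinuousWithinAt
      simpa using h4
    · have ht0 : (0:ℝ) < t := lt_of_le_of_ne ht.1 (Ne.symm htne)
      have h1mt : (1:ℝ) - t ≠ 0 := by have := ht.2; nlinarith [hx1]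
      exact (ContinuousAt.div
        ((Real.continuousAt_log h1mt).comp (by fun_prop) |>.pow 2)
        continuousAt_id htne).continuousWithinAt
  have hint : IntervalIntegrable (fun t : ℝ => (Real.log (1 - t)) ^ 2 / t)
      MeasureTheory.volume 0 x := by
    apply ContinuousOn.intervalIntegrable
    rwa [Set.uIcc_of_le hx0.le]
  -- derivative of Φ on (0, x)
  have hderiv : ∀ t ∈ Set.Ioo (0:ℝ) x,
      HasDerivAt Φ ((Real.log (1 - t)) ^ 2 / t) t := by
    intro t ht
    obtain ⟨ht0, htx⟩ := ht
    have ht1 : t < 1 := lt_trans htx hx1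
    have h1t0 : (0:ℝ) < 1 - t := by linarith
    have h1t1 : 1 - t < 1 := by linarith
    have h1mt : HasDerivAt (fun u : ℝ => 1 - u) (-1) t := (hasDerivAt_id t).const_sub 1
    have hlog : HasDerivAt Real.log t⁻¹ t := Real.hasDerivAt_log (ne_of_gt ht0)
    have hlog1 : HasDerivAt (fun u : ℝ => Real.log (1 - u)) (-(1 - t)⁻¹) t := by
      have := (Real.hasDerivAt_log (ne_of_gt h1t0)).comp t h1mt
      refine this.congr_deriv (Eq.symm ?_); ring
    have hsq : HasDerivAt (fun u : ℝ => (Real.log (1 - u)) ^ 2)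
        (2 * Real.log (1 - t) * -(1 - t)⁻¹) t := by
      have := hlog1.pow 2
      refine this.congr_deriv (Eq.symm ?_); push_cast; ring
    have hLi2c : HasDerivAt (fun u : ℝ => Li 2 (1 - u)) (Real.log t / (1 - t)) t := by
      have h := (hasDerivAt_Li2 h1t0 h1t1).comp t h1mt
      refine h.congr_deriv (Eq.symm ?_)
      rw [show (1 : ℝ) - (1 - t) = t by ring]
      ring
    have hLi3c : HasDerivAt (fun u : ℝ => Li 3 (1 - u)) (-(Li 2 (1 - t) / (1 - t))) t := by
      have h := (hasDerivAt_Li3 h1t0 h1t1).comp t h1mt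
      refine h.congr_deriv (Eq.symm ?_)
      ring
    have hA := hlog.mul hsq
    have hB := (hlog1.const_mul 2).mul hLi2c
    have hC := hLi3c.const_mul 2
    have total := (((hA.add hB).sub hC).add_const (2 * Li 3 1))
    have : Φ = fun u => Real.log u * Real.log (1 - u) ^ 2
        + 2 * Real.log (1 - u) * Li 2 (1 - u) - 2 * Li 3 (1 - u) + 2 * Li 3 1 := hΦ
    rw [this]
    refine total.congr_deriv (Eq.symm ?_)
    have hne : t ≠ 0 := ne_of_gt ht0
    have hne' : (1:ℝ) - t ≠ 0 := ne_of_gt h1t0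
    field_simp
    ring
  -- continuity of Φ on [0, x]
  have hmaps : ∀ t ∈ Set.Icc (0:ℝ) x, (1 - t) ∈ Set.Icc (0:ℝ) 1 := by
    intro t ht
    constructor <;> [linarith [ht.2, hx1.le]; linarith [ht.1]]
  have hcontψ : ContinuousOn (fun t : ℝ => 2 * Real.log (1 - t) * Li 2 (1 - t)
      - 2 * Li 3 (1 - t) + 2 * Li 3 1) (Set.Icc 0 x) := by
    have hsub : ContinuousOn (fun t : ℝ => 1 - t) (Set.Icc (0:ℝ) x) := by fun_prop
    have hLi2 : ContinuousOn (fun t : ℝ => Li 2 (1 - t)) (Set.Icc 0 x) :=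
      (continuousOn_Li (le_refl 2)).comp hsub hmaps
    have hLi3 : ContinuousOn (fun t : ℝ => Li 3 (1 - t)) (Set.Icc 0 x) :=
      (continuousOn_Li (by norm_num)).comp hsub hmaps
    have hlg : ContinuousOn (fun t : ℝ => Real.log (1 - t)) (Set.Icc 0 x) := by
      intro t ht
      have : (1:ℝ) - t ≠ 0 := by have := ht.2; nlinarith [hx1]
      exact ((Real.continuousAt_log this).comp (by fun_prop)).continuousWithinAt
    exact (((continuousOn_const.mul hlg).mul hLi2).sub (continuousOn_const.mul hLi3)).add
      continuousOn_const
  have hcontΦ : ContinuousOn Φ (Set.Icc 0 x) := by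
    have hterm1 : ContinuousOn (fun t : ℝ => Real.log t * (Real.log (1 - t)) ^ 2)
        (Set.Icc 0 x) := by
      intro t ht
      rcases eq_or_ne t 0 with rfl | htne
      · have hid : (fun t : ℝ => Real.log t * (Real.log (1 - t)) ^ 2)
            = fun t => (t * Real.log t) * (Real.log (1 - t) / t * Real.log (1 - t)) := by
          funext t
          rcases eq_or_ne t 0 with rfl | h
          · simp
          · field_simp
        have hmul : Tendsto (fun t : ℝ => t * Real.log t) (𝓝[≠] 0) (𝓝 0) := by
          have := (Real.continuous_mul_log.tendsto 0).mono_left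
            (nhdsWithin_le_nhds (s := {(0:ℝ)}ᶜ))
          simpa using this
        have h1 : Tendsto (fun t : ℝ => Real.log t * (Real.log (1 - t)) ^ 2) (𝓝[≠] 0) (𝓝 0) := by
          rw [hid]
          have := hmul.mul (hslope.mul (hlog1t.mono_left nhdsWithin_le_nhds))
          simpa using this
        have h2 : Tendsto (fun t : ℝ => Real.log t * (Real.log (1 - t)) ^ 2)
            (pure 0) (𝓝 0) := by
          rw [tendsto_pure_left]; intro s hs; simpa using mem_of_mem_nhds hs
        have h3 : Tendsto (fun t : ℝ => Real.log t * (Real.log (1 - t)) ^ 2) (𝓝 0) (𝓝 0) := by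
          have := tendsto_sup.2 ⟨h1, h2⟩
          rwa [nhdsNE_sup_pure] at this
        have h4 := h3.mono_left (nhdsWithin_le_nhds : 𝓝[Set.Icc 0 x] (0:ℝ) ≤ 𝓝 0)
        unfold ContinuousWithinAt
        simpa using h4
      · have ht0 : (0:ℝ) < t := lt_of_le_of_ne ht.1 (Ne.symm htne)
        have h1mt : (1:ℝ) - t ≠ 0 := by have := ht.2; nlinarith [hx1]
        exact ((Real.continuousAt_log htne).mul
          (((Real.continuousAt_log h1mt).comp (by fun_prop)).pow 2)).continuousWithinAt
    have : Φ = fun t => Real.log t * (Real.log (1 - t)) ^ 2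
        + (2 * Real.log (1 - t) * Li 2 (1 - t) - 2 * Li 3 (1 - t) + 2 * Li 3 1) := by
      funext t; rw [hΦ]; ring
    rw [this]
    exact hterm1.add hcontψ
  have key := intervalIntegral.integral_eq_sub_of_hasDeriv_right_of_le hx0.le hcontΦ
    (fun t ht => (hderiv t ht).hasDerivWithinAt) hint
  rw [key, hΦ]
  simp [Real.log_one]
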